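/- Let C₁, …, C_m be nonempty closed convex subsets of the Euclidean space ℝⁿ with projections P₁, …, P_m. Let I₁, …, I_S be strings, i.e. finite nonempty ordered tuples I_t = (i₁ᵗ, …, i_{γ(I_t)}ᵗ) of indices from {1, …, m}, and define the string operators T_t := P_{i_{γ(I_t)}ᵗ} ∘ ⋯ ∘ P_{i₂ᵗ} ∘ P_{i₁ᵗ}. Let ω ∈ ℝ^S be a positive weight vector with ω_t > 0 and Σ_t ω_t = 1, and define the string-averaging operator T := Σ_{t=1}^S ω_t·T_t. If for at least one starting point x⁰ ∈ ℝⁿ the sequence generated by x^{k+1} = T(x^k) is bounded, then this sequence converges for every starting point x⁰ ∈ ℝⁿ. -/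

import Mathlib

open Filter

/-- `P` is the metric (nearest-point) projection onto the set `C`. -/
def IsProjOn {H : Type*} [NormedAddCommGroup H] (P : H → H) (C : Set H) : Prop :=
  ∀ x : H, P x ∈ C ∧ ∀ y ∈ C, ‖x - P x‖ ≤ ‖x - y‖

/-- Projection along a string `I = (i₁, …, i_γ)`: the composition
`P_{i_γ} ∘ ⋯ ∘ P_{i₂} ∘ P_{i₁}` (the head of the list is applied first). -/
def strOp {E : Type*} {m : ℕ} (P : Fin m → E → E) (I : List (Fin m)) : E → E :=
  fun x => I.foldl (fun y i => P i y) x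

/-- The string-averaging operator `T = Σ_t ω_t · T_t`. -/
noncomputable def strAvg {E : Type*} [AddCommMonoid E] [Module ℝ E] {m S : ℕ}
    (P : Fin m → E → E) (I : Fin S → List (Fin m)) (ω : Fin S → ℝ) : E → E :=
  fun x => ∑ t, ω t • strOp P (I t) x

set_option linter.unusedSectionVars false

namespace CTAux

variable {E : Type*} [NormedAddCommGroup E] [InnerProductSpace ℝ E]

/-- Strong (quasi-)nonexpansiveness with modulus `c`. -/
def SQNE (c : ℝ) (T : E → E) : Prop :=
  ∀ x y : E, ‖T x - T y‖ ^ 2 + c * ‖(x - T x) - (y - T y)‖ ^ 2 ≤ ‖x - y‖ ^ 2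

lemma le_of_forall_pos_le_add' {a b : ℝ} (h : ∀ ε > 0, a ≤ b + ε) : a ≤ b := by
  by_contra hc
  push_neg at hc
  have := h ((a - b) / 2) (by linarith)
  linarith

lemma projOn_inner_le {P : E → E} {C : Set E} (hC : Convex ℝ C) (hP : IsProjOn P C)
    (x : E) : ∀ w ∈ C, (inner ℝ (x - P x) (w - P x) : ℝ) ≤ 0 := by
  have hPx : P x ∈ C := (hP x).1
  haveI : Nonempty C := ⟨⟨P x, hPx⟩⟩
  have h : ‖x - P x‖ = ⨅ w : C, ‖x - w‖ := by
    refine le_antisymm (le_ciInf fun w => (hP x).2 w w.2) ?_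
    exact ciInf_le ⟨0, fun _ ⟨w, hw⟩ => hw ▸ norm_nonneg _⟩ (⟨P x, hPx⟩ : C)
  exact (norm_eq_iInf_iff_real_inner_le_zero hC hPx).mp h

lemma projOn_sqne {P : E → E} {C : Set E} (hC : Convex ℝ C) (hP : IsProjOn P C) :
    SQNE 1 P := by
  intro x y
  have h1 : (inner ℝ (x - P x) (P y - P x) : ℝ) ≤ 0 := projOn_inner_le hC hP x (P y) (hP y).1
  have h2 : (inner ℝ (y - P y) (P x - P y) : ℝ) ≤ 0 := projOn_inner_le hC hP y (P x) (hP x).1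
  have key : ‖P x - P y‖ ^ 2 ≤ (inner ℝ (x - y) (P x - P y) : ℝ) := by
    have e1 : (inner ℝ (x - P x) (P y - P x) : ℝ) = - (inner ℝ (x - P x) (P x - P y) : ℝ) := by
      rw [← inner_neg_right]; congr 1; abel
    have e2 : (x - P x) = (x - y) - (P x - P y) + (y - P y) := by abel
    rw [e1] at h1
    rw [e2, inner_add_left, inner_sub_left, real_inner_self_eq_norm_sq] at h1
    linarith
  have e3 : (x - P x) - (y - P y) = (x - y) - (P x - P y) := by abel
  rw [e3]
  have hd := norm_sub_sq_real (x - y) (P x - P y)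
  linarith [key, hd]

lemma SQNE.mono {c c' : ℝ} {T : E → E} (h : SQNE c T) (hle : c' ≤ c) : SQNE c' T := by
  intro x y
  have := h x y
  nlinarith [pow_nonneg (norm_nonneg ((x - T x) - (y - T y))) 2]

lemma SQNE.nonexpansive {c : ℝ} {T : E → E} (hc : 0 ≤ c) (h : SQNE c T) :
    ∀ x y : E, ‖T x - T y‖ ≤ ‖x - y‖ := by
  intro x y
  have h1 := h x y
  have h2 : ‖T x - T y‖ ^ 2 ≤ ‖x - y‖ ^ 2 := by
    nlinarith [mul_nonneg hc (pow_nonneg (norm_nonneg ((x - T x) - (y - T y))) 2)]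
  nlinarith [norm_nonneg (T x - T y), norm_nonneg (x - y)]

lemma SQNE.comp {c₁ c₂ : ℝ} (h₁ : 0 < c₁) (h₂ : 0 < c₂) {T₁ T₂ : E → E}
    (H₁ : SQNE c₁ T₁) (H₂ : SQNE c₂ T₂) :
    SQNE (c₁ * c₂ / (c₁ + c₂)) (fun x => T₂ (T₁ x)) := by
  intro x y
  have hA := H₁ x y
  have hB := H₂ (T₁ x) (T₁ y)
  set a : E := (x - T₁ x) - (y - T₁ y) with ha
  set b : E := (T₁ x - T₂ (T₁ x)) - (T₁ y - T₂ (T₁ y)) with hb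
  have hab : (x - T₂ (T₁ x)) - (y - T₂ (T₁ y)) = a + b := by rw [ha, hb]; abel
  have hsum : 0 < c₁ + c₂ := by linarith
  have key : c₁ * c₂ / (c₁ + c₂) * ‖a + b‖ ^ 2 ≤ c₁ * ‖a‖ ^ 2 + c₂ * ‖b‖ ^ 2 := by
    rw [div_mul_eq_mul_div, div_le_iff₀ hsum]
    have htri : ‖a + b‖ ≤ ‖a‖ + ‖b‖ := norm_add_le a b
    nlinarith [sq_nonneg (c₁ * ‖a‖ - c₂ * ‖b‖), norm_nonneg a, norm_nonneg b,
      norm_nonneg (a + b), mul_pos h₁ h₂,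
      mul_self_le_mul_self (norm_nonneg (a + b)) htri]
  simp only [hab]
  linarith [key, hA, hB, mul_le_mul_of_nonneg_left hB (le_of_lt h₂)]

lemma sqne_strOp {m : ℕ} {P : Fin m → E → E} (hP : ∀ i, SQNE 1 (P i)) :
    ∀ l : List (Fin m), l ≠ [] → SQNE ((l.length : ℝ))⁻¹ (strOp P l) := by
  intro l
  induction l with
  | nil => intro h; exact absurd rfl h
  | cons i L ih =>
    intro _
    cases L with
    | nil =>
      have : strOp P [i] = P i := rfl
      rw [this]
      simpa using (hP i)
    | cons j L' =>
      have hL : (j :: L') ≠ [] := by simp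
      have hrec := ih hL
      have hkpos : (0:ℝ) < ((j :: L').length : ℝ) := by
        have : 0 < (j :: L').length := Nat.succ_pos _
        exact_mod_cast this
      have hcomp := SQNE.comp (c₁ := 1) (c₂ := ((j :: L').length : ℝ)⁻¹)
        one_pos (inv_pos.mpr hkpos) (hP i) hrec
      have heq : strOp P (i :: j :: L') = fun x => strOp P (j :: L') (P i x) := rfl
      rw [heq]
      refine hcomp.mono (le_of_eq ?_)
      have hlen : ((i :: j :: L').length : ℝ) = ((j :: L').length : ℝ) + 1 := by
        push_cast [List.length_cons]
        ring
      rw [hlen, one_mul]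
      rw [eq_div_iff (by positivity)]
      field_simp

lemma jensen_normsq {S : ℕ} (ω : Fin S → ℝ) (hω : ∀ t, 0 ≤ ω t) (h1 : ∑ t, ω t = 1)
    (v : Fin S → E) : ‖∑ t, ω t • v t‖ ^ 2 ≤ ∑ t, ω t * ‖v t‖ ^ 2 := by
  have h2 : ‖∑ t, ω t • v t‖ ≤ ∑ t, ω t * ‖v t‖ := by
    refine (norm_sum_le _ _).trans (le_of_eq (Finset.sum_congr rfl fun t _ => ?_))
    rw [norm_smul, Real.norm_eq_abs, abs_of_nonneg (hω t)]
  have h3 : (∑ t, Real.sqrt (ω t) * (Real.sqrt (ω t) * ‖v t‖)) ^ 2 ≤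
      (∑ t, Real.sqrt (ω t) ^ 2) * ∑ t, (Real.sqrt (ω t) * ‖v t‖) ^ 2 :=
    Finset.sum_mul_sq_le_sq_mul_sq _ _ _
  have e1 : ∀ t : Fin S, Real.sqrt (ω t) * (Real.sqrt (ω t) * ‖v t‖) = ω t * ‖v t‖ := by
    intro t; rw [← mul_assoc, Real.mul_self_sqrt (hω t)]
  have e2 : ∀ t : Fin S, Real.sqrt (ω t) ^ 2 = ω t := fun t => Real.sq_sqrt (hω t)
  have e3 : ∀ t : Fin S, (Real.sqrt (ω t) * ‖v t‖) ^ 2 = ω t * ‖v t‖ ^ 2 := by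
    intro t; rw [mul_pow, Real.sq_sqrt (hω t)]
  simp only [e1, e2, e3] at h3
  rw [h1, one_mul] at h3
  calc ‖∑ t, ω t • v t‖ ^ 2 ≤ (∑ t, ω t * ‖v t‖) ^ 2 := by
        exact pow_le_pow_left₀ (norm_nonneg _) h2 2
    _ ≤ ∑ t, ω t * ‖v t‖ ^ 2 := h3

lemma sqne_avg {S : ℕ} {c : ℝ} (hc : 0 ≤ c) (T : Fin S → E → E) (hT : ∀ t, SQNE c (T t))
    (ω : Fin S → ℝ) (hω : ∀ t, 0 ≤ ω t) (h1 : ∑ t, ω t = 1) :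
    SQNE c (fun x => ∑ t, ω t • T t x) := by
  intro x y
  have hx : ∀ w : E, (∑ t, ω t • w) = w := fun w => by rw [← Finset.sum_smul, h1, one_smul]
  have hN : (∑ t, ω t • T t x) - (∑ t, ω t • T t y) = ∑ t, ω t • (T t x - T t y) := by
    rw [← Finset.sum_sub_distrib]
    exact Finset.sum_congr rfl fun t _ => (smul_sub _ _ _).symm
  have hD : (x - ∑ t, ω t • T t x) - (y - ∑ t, ω t • T t y)
      = ∑ t, ω t • ((x - T t x) - (y - T t y)) := by
    have hterm : ∀ t : Fin S, ω t • ((x - T t x) - (y - T t y))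
        = (ω t • x - ω t • T t x) - (ω t • y - ω t • T t y) := by
      intro t; rw [smul_sub, smul_sub, smul_sub]
    rw [Finset.sum_congr rfl fun t _ => hterm t]
    simp only [Finset.sum_sub_distrib, hx]
  simp only [hN, hD]
  have j1 := jensen_normsq ω hω h1 (fun t => T t x - T t y)
  have j2 := jensen_normsq ω hω h1 (fun t => (x - T t x) - (y - T t y))
  have hsum : (∑ t, ω t * ‖T t x - T t y‖ ^ 2) + c * ∑ t, ω t * ‖(x - T t x) - (y - T t y)‖ ^ 2
      ≤ ‖x - y‖ ^ 2 := by
    rw [Finset.mul_sum, ← Finset.sum_add_distrib]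
    calc (∑ t, (ω t * ‖T t x - T t y‖ ^ 2 + c * (ω t * ‖(x - T t x) - (y - T t y)‖ ^ 2)))
        ≤ ∑ t : Fin S, ω t * ‖x - y‖ ^ 2 := by
          refine Finset.sum_le_sum fun t _ => ?_
          have := hT t x y
          have h' : ω t * (‖T t x - T t y‖ ^ 2 + c * ‖(x - T t x) - (y - T t y)‖ ^ 2)
              ≤ ω t * ‖x - y‖ ^ 2 := mul_le_mul_of_nonneg_left this (hω t)
          nlinarith [h']
      _ = ‖x - y‖ ^ 2 := by rw [← Finset.sum_mul, h1, one_mul]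
  nlinarith [j1, j2, mul_le_mul_of_nonneg_left j2 hc]

lemma exists_fixed_of_bounded_orbit [ProperSpace E] {T : E → E}
    (hT : ∀ x y : E, ‖T x - T y‖ ≤ ‖x - y‖) {y : ℕ → E}
    (hy : ∀ k, y (k + 1) = T (y k)) {R : ℝ} (hR : ∀ k, ‖y k‖ ≤ R) :
    ∃ z : E, T z = z := by
  set φ : E → ℝ := fun x => limsup (fun k => ‖y k - x‖) atTop with hφdef
  have hbdd : ∀ x : E, IsBoundedUnder (· ≤ ·) atTop (fun k => ‖y k - x‖) := fun x =>
    isBoundedUnder_of ⟨R + ‖x‖, fun k => (norm_sub_le _ _).trans (by linarith [hR k])⟩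
  have hcob : ∀ x : E, IsCoboundedUnder (· ≤ ·) atTop (fun k => ‖y k - x‖) := fun x =>
    isCoboundedUnder_le_of_le atTop (fun k => norm_nonneg _)
  have hφ0 : ∀ x : E, 0 ≤ φ x := fun x =>
    le_limsup_of_frequently_le (Frequently.of_forall fun k => norm_nonneg _) (hbdd x)
  have hev : ∀ x : E, ∀ ε > (0:ℝ), ∀ᶠ k in atTop, ‖y k - x‖ < φ x + ε := by
    intro x ε hε
    exact eventually_lt_of_limsup_lt (by simpa [hφdef] using lt_add_of_pos_right (φ x) hε)
      (hbdd x)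
  -- Lipschitz continuity of φ
  have hlip : ∀ u v : E, φ u ≤ φ v + ‖u - v‖ := by
    intro u v
    refine le_of_forall_pos_le_add' fun ε hε => ?_
    refine limsup_le_of_le (hcob u) ?_
    filter_upwards [hev v ε hε] with k hk
    have h1 : ‖y k - u‖ ≤ ‖y k - v‖ + ‖v - u‖ := norm_sub_le_norm_sub_add_norm_sub _ _ _
    rw [norm_sub_rev v u] at h1
    linarith
  have hcont : Continuous φ := by
    have : LipschitzWith 1 φ := by
      refine LipschitzWith.of_dist_le_mul fun u v => ?_
      rw [NNReal.coe_one, one_mul, Real.dist_eq, abs_sub_le_iff]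
      constructor
      · have := hlip u v; rw [dist_eq_norm]; linarith
      · have := hlip v u; rw [dist_eq_norm, norm_sub_rev]; linarith
    exact this.continuous
  -- φ decreases under T
  have hTφ : ∀ x : E, φ (T x) ≤ φ x := by
    intro x
    refine le_of_forall_pos_le_add' fun ε hε => ?_
    refine limsup_le_of_le (hcob (T x)) ?_
    rw [eventually_atTop]
    obtain ⟨N, hN⟩ := eventually_atTop.mp (hev x ε hε)
    refine ⟨N + 1, fun k hk => ?_⟩
    obtain ⟨j, rfl⟩ : ∃ j, k = j + 1 :=
      ⟨k - 1, (Nat.succ_pred_eq_of_pos (lt_of_lt_of_le (Nat.succ_pos N) hk)).symm⟩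
    rw [hy j]
    exact le_of_lt (lt_of_le_of_lt (hT (y j) x) (hN j (by omega)))
  -- coercivity
  have hR0 : 0 ≤ R := le_trans (norm_nonneg (y 0)) (hR 0)
  have hcoer : ∀ x : E, ‖x‖ - R ≤ φ x := by
    intro x
    refine le_limsup_of_frequently_le (Frequently.of_forall fun k => ?_) (hbdd x)
    have h1 : ‖x‖ - ‖y k‖ ≤ ‖x - y k‖ := by
      have := norm_sub_norm_le x (y k); linarith [abs_le.mp (abs_norm_sub_norm_le x (y k))]
    rw [norm_sub_rev] at h1
    linarith [hR k]
  -- minimizer over a compact ball is a global minimizer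
  have hrad : (0:ℝ) ≤ R + φ 0 + 1 := by linarith [hφ0 0]
  obtain ⟨z, hzK, hzmin⟩ := (isCompact_closedBall (0:E) (R + φ 0 + 1)).exists_isMinOn
    ⟨0, Metric.mem_closedBall_self hrad⟩ hcont.continuousOn
  have hz0 : φ z ≤ φ 0 := hzmin (Metric.mem_closedBall_self hrad)
  have hglobal : ∀ x : E, φ z ≤ φ x := by
    intro x
    by_cases hx : x ∈ Metric.closedBall (0:E) (R + φ 0 + 1)
    · exact hzmin hx
    · have hxn : R + φ 0 + 1 < ‖x‖ := by
        rw [Metric.mem_closedBall, dist_zero_right, not_le] at hx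
        exact hx
      have := hcoer x
      linarith
  -- strong convexity of φ² at midpoints
  have hmid : ∀ u v : E, φ ((2:ℝ)⁻¹ • (u + v)) ^ 2
      ≤ φ u ^ 2 / 2 + φ v ^ 2 / 2 - ‖u - v‖ ^ 2 / 4 := by
    intro u v
    set mP : E := (2:ℝ)⁻¹ • (u + v) with hm
    have par : ∀ k, ‖y k - mP‖ ^ 2
        = ‖y k - u‖ ^ 2 / 2 + ‖y k - v‖ ^ 2 / 2 - ‖u - v‖ ^ 2 / 4 := by
      intro k
      have hpl := parallelogram_law_with_norm ℝ (y k - u) (y k - v)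
      have e1 : (y k - u) + (y k - v) = (2:ℝ) • (y k - mP) := by
        rw [hm, smul_sub, smul_smul]
        norm_num
        module
      have e2 : (y k - u) - (y k - v) = v - u := by abel
      rw [e1, e2, norm_smul, norm_sub_rev v u] at hpl
      simp only [Real.norm_ofNat] at hpl
      linear_combination hpl / 4
    refine le_of_forall_pos_le_add' fun ε hε => ?_
    have hden : (0:ℝ) < φ u + φ v + 1 := by have := hφ0 u; have := hφ0 v; linarith
    set δ : ℝ := min 1 (ε / (φ u + φ v + 1)) with hδdef
    have hδpos : 0 < δ := lt_min one_pos (by positivity)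
    have hδ1 : δ ≤ 1 := min_le_left _ _
    have hδ2 : δ ≤ ε / (φ u + φ v + 1) := min_le_right _ _
    have hδbound : δ * (φ u + φ v) + δ ^ 2 ≤ ε := by
      have h1 : δ * (φ u + φ v) + δ ^ 2 ≤ δ * (φ u + φ v + 1) := by nlinarith
      have h2 : δ * (φ u + φ v + 1) ≤ ε := by
        rw [← div_mul_cancel₀ ε (ne_of_gt hden)]
        exact mul_le_mul_of_nonneg_right hδ2 hden.le
      linarith
    set B : ℝ := φ u ^ 2 / 2 + φ v ^ 2 / 2 - ‖u - v‖ ^ 2 / 4 + ε with hBdef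
    have hevB : ∀ᶠ k in atTop, ‖y k - mP‖ ^ 2 ≤ B := by
      filter_upwards [hev u δ hδpos, hev v δ hδpos] with k h1 h2
      have s1 : ‖y k - u‖ ^ 2 ≤ (φ u + δ) ^ 2 := by nlinarith [norm_nonneg (y k - u)]
      have s2 : ‖y k - v‖ ^ 2 ≤ (φ v + δ) ^ 2 := by nlinarith [norm_nonneg (y k - v)]
      rw [par k, hBdef]
      nlinarith [hδbound]
    have hB0 : 0 ≤ B := by
      obtain ⟨k, hk⟩ := hevB.exists
      exact le_trans (sq_nonneg _) hk
    have hφm : φ mP ≤ Real.sqrt B := by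
      refine limsup_le_of_le (hcob mP) ?_
      filter_upwards [hevB] with k hk
      exact (Real.le_sqrt (norm_nonneg _) hB0).mpr hk
    calc φ mP ^ 2 ≤ Real.sqrt B ^ 2 := by
          exact pow_le_pow_left₀ (hφ0 mP) hφm 2
      _ = B := Real.sq_sqrt hB0
  -- conclude
  refine ⟨z, ?_⟩
  by_contra hne
  have hq : 0 < ‖T z - z‖ := by
    rw [norm_pos_iff, sub_ne_zero]
    exact hne
  have h1 := hmid (T z) z
  have h2 : φ z ≤ φ ((2:ℝ)⁻¹ • (T z + z)) := hglobal _
  have h3 : φ z ^ 2 ≤ φ ((2:ℝ)⁻¹ • (T z + z)) ^ 2 := pow_le_pow_left₀ (hφ0 z) h2 2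
  have h4 : φ (T z) ≤ φ z := hTφ z
  have h5 : φ (T z) ^ 2 ≤ φ z ^ 2 := pow_le_pow_left₀ (hφ0 (T z)) h4 2
  nlinarith [h1, h3, h5, sq_nonneg ‖T z - z‖, hq, mul_pos hq hq]

lemma tendsto_orbit_of_fixed [ProperSpace E] {T : E → E} {c : ℝ} (hc : 0 < c)
    (hT : SQNE c T) {z : E} (hz : T z = z) (x0 : E) :
    ∃ p : E, Tendsto (fun k : ℕ => T^[k] x0) atTop (nhds p) := by
  have hne : ∀ u v : E, ‖T u - T v‖ ≤ ‖u - v‖ := hT.nonexpansive hc.le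
  set x : ℕ → E := fun k => T^[k] x0 with hxdef
  have hxs : ∀ k, x (k + 1) = T (x k) := fun k => Function.iterate_succ_apply' T k x0
  have hmono : ∀ p : E, T p = p → Antitone fun k => ‖x k - p‖ := by
    intro p hp
    refine antitone_nat_of_succ_le fun k => ?_
    rw [hxs k]
    calc ‖T (x k) - p‖ = ‖T (x k) - T p‖ := by rw [hp]
      _ ≤ ‖x k - p‖ := hne _ _
  have haz : Antitone fun k => ‖x k - z‖ := hmono z hz
  have hx0 : x 0 = x0 := rfl
  have hbd : ∀ k, ‖x k - z‖ ≤ ‖x0 - z‖ := fun k => by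
    have h := haz (Nat.zero_le k); simp only at h; rwa [hx0] at h
  -- squared distances converge
  have hA : Antitone fun k => ‖x k - z‖ ^ 2 := fun i j h =>
    pow_le_pow_left₀ (norm_nonneg _) (haz h) 2
  have hbb : BddBelow (Set.range fun k => ‖x k - z‖ ^ 2) := by
    refine ⟨0, ?_⟩
    rintro _ ⟨k, rfl⟩
    positivity
  have hL := tendsto_atTop_ciInf hA hbb
  have hdiff : Tendsto (fun k => ‖x k - z‖ ^ 2 - ‖x (k + 1) - z‖ ^ 2) atTop (nhds 0) := by
    have h2 : Tendsto (fun k => ‖x (k + 1) - z‖ ^ 2) atTop (nhds (⨅ k, ‖x k - z‖ ^ 2)) := by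
      exact hL.comp (tendsto_add_atTop_nat 1)
    simpa using hL.sub h2
  -- displacement tends to zero
  have hkey : ∀ k, c * ‖x k - T (x k)‖ ^ 2 ≤ ‖x k - z‖ ^ 2 - ‖x (k + 1) - z‖ ^ 2 := by
    intro k
    have := hT (x k) z
    rw [hz] at this
    have e : (x k - T (x k)) - (z - z) = x k - T (x k) := by abel
    rw [e] at this
    rw [hxs k]
    linarith
  have hd0 : Tendsto (fun k => ‖x k - T (x k)‖ ^ 2) atTop (nhds 0) := by
    have hg : Tendsto (fun k => (‖x k - z‖ ^ 2 - ‖x (k + 1) - z‖ ^ 2) / c) atTop (nhds 0) := by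
      simpa using hdiff.div_const c
    refine squeeze_zero (fun k => by positivity) (fun k => ?_) hg
    rw [le_div_iff₀ hc, mul_comm]
    exact hkey k
  have hdisp : Tendsto (fun k => x k - T (x k)) atTop (nhds 0) := by
    rw [tendsto_zero_iff_norm_tendsto_zero]
    have hsq : Tendsto (fun k => Real.sqrt (‖x k - T (x k)‖ ^ 2)) atTop (nhds 0) := by
      have h := (Real.continuous_sqrt.tendsto 0).comp hd0
      simp only [Function.comp_def] at h
      simpa using h
    refine hsq.congr fun k => ?_
    rw [Real.sqrt_sq (norm_nonneg _)]
  -- extract a convergent subsequence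
  have hxball : ∀ k, x k ∈ Metric.closedBall z ‖x0 - z‖ := fun k => by
    rw [Metric.mem_closedBall, dist_eq_norm]
    exact hbd k
  obtain ⟨p, hpball, ψ, hψmono, hψtend⟩ :=
    (isCompact_closedBall z ‖x0 - z‖).tendsto_subseq hxball
  have hTcont : Continuous T := by
    have : LipschitzWith 1 T := by
      refine LipschitzWith.of_dist_le_mul fun u v => ?_
      rw [NNReal.coe_one, one_mul, dist_eq_norm, dist_eq_norm]
      exact hne u v
    exact this.continuous
  have h1 : Tendsto (fun j => T (x (ψ j))) atTop (nhds (T p)) :=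
    (hTcont.tendsto p).comp hψtend
  have h2 : Tendsto (fun j => T (x (ψ j))) atTop (nhds p) := by
    have := hψtend.sub (hdisp.comp hψmono.tendsto_atTop)
    simp only [Function.comp_def] at this ⊢
    refine (by simpa using this : Tendsto (fun j => x (ψ j) - (x (ψ j) - T (x (ψ j)))) atTop
      (nhds p)).congr fun j => ?_
    abel
  have hfp : T p = p := tendsto_nhds_unique h1 h2
  -- the whole sequence converges to p
  have hap : Antitone fun k => ‖x k - p‖ := hmono p hfp
  have hbbp : BddBelow (Set.range fun k => ‖x k - p‖) := by
    refine ⟨0, ?_⟩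
    rintro _ ⟨k, rfl⟩
    positivity
  have hlimp := tendsto_atTop_ciInf hap hbbp
  have hsub0 : Tendsto (fun j => ‖x (ψ j) - p‖) atTop (nhds 0) := by
    have := tendsto_iff_norm_sub_tendsto_zero.mp hψtend
    simpa [Function.comp_def] using this
  have hsubI : Tendsto (fun j => ‖x (ψ j) - p‖) atTop (nhds (⨅ k, ‖x k - p‖)) :=
    hlimp.comp hψmono.tendsto_atTop
  have hI0 : (⨅ k, ‖x k - p‖) = 0 := tendsto_nhds_unique hsubI hsub0
  rw [hI0] at hlimp
  refine ⟨p, ?_⟩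
  rw [tendsto_iff_norm_sub_tendsto_zero]
  exact hlimp

end CTAux

open CTAux in
/-- Censor–Tom: if the string-averaging projection sequence is bounded for at least one
starting point, then it converges for every starting point. -/
theorem stmt12 {n m S : ℕ}
    (C : Fin m → Set (EuclideanSpace ℝ (Fin n)))
    (hne : ∀ i, (C i).Nonempty) (hcl : ∀ i, IsClosed (C i)) (hcv : ∀ i, Convex ℝ (C i))
    (P : Fin m → EuclideanSpace ℝ (Fin n) → EuclideanSpace ℝ (Fin n))
    (hP : ∀ i, IsProjOn (P i) (C i))
    (I : Fin S → List (Fin m)) (hI : ∀ t, I t ≠ [])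
    (ω : Fin S → ℝ) (hω : ∀ t, 0 < ω t) (hω1 : ∑ t, ω t = 1)
    (hbdd : ∃ x0 : EuclideanSpace ℝ (Fin n),
      Bornology.IsBounded (Set.range fun k : ℕ => (strAvg P I ω)^[k] x0)) :
    ∀ x0 : EuclideanSpace ℝ (Fin n),
      ∃ z : EuclideanSpace ℝ (Fin n),
        Tendsto (fun k : ℕ => (strAvg P I ω)^[k] x0) atTop (nhds z) := by
  have hS : S ≠ 0 := by
    rintro rfl
    simp at hω1
  have hPe : ∀ i, SQNE 1 (P i) := fun i => projOn_sqne (hcv i) (hP i)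
  set γ : ℕ := Finset.univ.sup fun t : Fin S => (I t).length with hγdef
  have t0 : Fin S := ⟨0, Nat.pos_of_ne_zero hS⟩
  have hγ1 : 1 ≤ γ := by
    have h1 : 1 ≤ (I t0).length := List.length_pos_iff.mpr (hI t0)
    exact le_trans h1 (Finset.le_sup (f := fun t : Fin S => (I t).length) (Finset.mem_univ t0))
  have hγpos : (0:ℝ) < (γ:ℝ)⁻¹ := by
    have : (0:ℝ) < (γ:ℝ) := by exact_mod_cast hγ1
    positivity
  have hTt : ∀ t, SQNE ((γ:ℝ)⁻¹) (strOp P (I t)) := by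
    intro t
    refine (sqne_strOp hPe (I t) (hI t)).mono ?_
    have hlp : (0:ℝ) < ((I t).length : ℝ) := by
      exact_mod_cast List.length_pos_iff.mpr (hI t)
    have hle : ((I t).length : ℝ) ≤ (γ:ℝ) := by
      exact_mod_cast Finset.le_sup (f := fun t : Fin S => (I t).length) (Finset.mem_univ t)
    exact inv_anti₀ hlp hle
  have hT : SQNE ((γ:ℝ)⁻¹) (strAvg P I ω) :=
    sqne_avg hγpos.le _ hTt ω (fun t => (hω t).le) hω1
  have hnexp := hT.nonexpansive hγpos.le
  obtain ⟨x0', hb⟩ := hbdd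
  obtain ⟨R, hR⟩ := isBounded_iff_forall_norm_le.mp hb
  have hRk : ∀ k : ℕ, ‖(strAvg P I ω)^[k] x0'‖ ≤ R := fun k => hR _ ⟨k, rfl⟩
  obtain ⟨z, hz⟩ := exists_fixed_of_bounded_orbit hnexp
    (fun k => Function.iterate_succ_apply' (strAvg P I ω) k x0') hRk
  intro x0
  exact tendsto_orbit_of_fixed hγpos hT hz x0
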